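/- (Compactness criterion for the characterisation) Let P be a finite set of atomic propositions and let C be any class of relational inquisitive modal models over P. The following are equivalent: (1) for every FO formula φ(x) with one free world-sort variable that is ~-invariant over C, there is an InqML formula ψ such that for all world-pointed models 𝔐,w in C: 𝔐 ⊨ φ(w) iff M(𝔐),w ⊨ ψ, where M(𝔐) is the inquisitive modal model induced by 𝔐; (2) every FO formula φ(x) with one free world-sort variable that is ~-invariant over C is ~^n-invariant over C for some n ∈ ℕ. -/

import Mathlib

/-- Formulas of inquisitive modal logic InqML over atomic propositions `P`. -/
inductive InqForm (P : Type) : Type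
  | atom : P → InqForm P
  | bot : InqForm P
  | and : InqForm P → InqForm P → InqForm P
  | impl : InqForm P → InqForm P → InqForm P
  | idisj : InqForm P → InqForm P → InqForm P
  | box : InqForm P → InqForm P
  | boxplus : InqForm P → InqForm P

/-- An inquisitive modal model `M = ⟨W, Σ, V⟩`. -/
structure InqModel (P : Type) where
  W : Type
  Sig : W → Set (Set W)
  Sig_nonempty : ∀ w, (Sig w).Nonempty
  Sig_downward : ∀ w, ∀ s ∈ Sig w, ∀ t ⊆ s, t ∈ Sig w
  V : P → Set W

/-- `σ(w) = ⋃ Σ(w)`. -/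
def InqModel.sigma {P : Type} (M : InqModel P) (w : M.W) : Set M.W :=
  ⋃₀ M.Sig w

/-- Support of a formula at an information state `s ⊆ W`. -/
def support {P : Type} (M : InqModel P) : InqForm P → Set M.W → Prop
  | .atom p, s => s ⊆ M.V p
  | .bot, s => s = ∅
  | .and φ ψ, s => support M φ s ∧ support M ψ s
  | .impl φ ψ, s => ∀ t ⊆ s, support M φ t → support M ψ t
  | .idisj φ ψ, s => support M φ s ∨ support M ψ s
  | .box φ, s => ∀ w ∈ s, support M φ (M.sigma w)
  | .boxplus φ, s => ∀ w ∈ s, ∀ t ∈ M.Sig w, support M φ t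

/-- Truth at a world: `M,w ⊨ φ` iff `M,{w} ⊨ φ`. -/
def truth {P : Type} (M : InqModel P) (w : M.W) (φ : InqForm P) : Prop :=
  support M φ {w}

/-- Modal depth: maximal nesting depth of `□` and `⊞`. -/
def mdepth {P : Type} : InqForm P → ℕ
  | .atom _ => 0
  | .bot => 0
  | .and φ ψ => max (mdepth φ) (mdepth ψ)
  | .impl φ ψ => max (mdepth φ) (mdepth ψ)
  | .idisj φ ψ => max (mdepth φ) (mdepth ψ)
  | .box φ => mdepth φ + 1
  | .boxplus φ => mdepth φ + 1

/-- Lift of a relation between worlds to sets of worlds: every world on either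
side is related to some world on the other side. -/
def StateRel {W W' : Type} (Z : W → W' → Prop) (s : Set W) (s' : Set W') : Prop :=
  (∀ w ∈ s, ∃ w' ∈ s', Z w w') ∧ (∀ w' ∈ s', ∃ w ∈ s, Z w w')

/-- `n`-bisimilarity between worlds of two inquisitive modal models. -/
def NBisimW {P : Type} (M M' : InqModel P) : ℕ → M.W → M'.W → Prop
  | 0, w, w' => ∀ p : P, w ∈ M.V p ↔ w' ∈ M'.V p
  | n + 1, w, w' => (∀ p : P, w ∈ M.V p ↔ w' ∈ M'.V p) ∧
      (∀ s ∈ M.Sig w, ∃ s' ∈ M'.Sig w', StateRel (NBisimW M M' n) s s') ∧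
      (∀ s' ∈ M'.Sig w', ∃ s ∈ M.Sig w, StateRel (NBisimW M M' n) s s')

/-- `n`-bisimilarity between information states. -/
def NBisimS {P : Type} (M M' : InqModel P) (n : ℕ) (s : Set M.W) (s' : Set M'.W) : Prop :=
  StateRel (NBisimW M M' n) s s'

/-- `Z` is a bisimulation between two inquisitive modal models. -/
def IsBisimulation {P : Type} (M M' : InqModel P) (Z : M.W → M'.W → Prop) : Prop :=
  ∀ w w', Z w w' →
    (∀ p : P, w ∈ M.V p ↔ w' ∈ M'.V p) ∧
    (∀ s ∈ M.Sig w, ∃ s' ∈ M'.Sig w', StateRel Z s s') ∧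
    (∀ s' ∈ M'.Sig w', ∃ s ∈ M.Sig w, StateRel Z s s')

/-- Bisimilarity of worlds: inclusion in some bisimulation. -/
def BisimW {P : Type} (M M' : InqModel P) (w : M.W) (w' : M'.W) : Prop :=
  ∃ Z, IsBisimulation M M' Z ∧ Z w w'

/-- Bisimilarity of information states. -/
def BisimS {P : Type} (M M' : InqModel P) (s : Set M.W) (s' : Set M'.W) : Prop :=
  StateRel (BisimW M M') s s'

/-- Two-sorted first-order formulas over the signature with a world sort, a
state sort, binary relations `E` and `∈` between worlds and states, equality on
both sorts, and a unary predicate for each atom in `P`.  Variables are de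
Bruijn indices; `FO P n m` has world-sort variables `Fin n` and state-sort
variables `Fin m`.  (Other connectives and `∃` are definable from `⊥`, `→`, `∀`.) -/
inductive FO (P : Type) : ℕ → ℕ → Type
  | eqW {n m : ℕ} : Fin n → Fin n → FO P n m
  | eqS {n m : ℕ} : Fin m → Fin m → FO P n m
  | rel {n m : ℕ} : Fin n → Fin m → FO P n m
  | mem {n m : ℕ} : Fin n → Fin m → FO P n m
  | atom {n m : ℕ} : P → Fin n → FO P n m
  | fal {n m : ℕ} : FO P n m
  | imp {n m : ℕ} : FO P n m → FO P n m → FO P n m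
  | allW {n m : ℕ} : FO P (n + 1) m → FO P n m
  | allS {n m : ℕ} : FO P n (m + 1) → FO P n m

/-- Satisfaction of a two-sorted first-order formula in the two-sorted
structure with world sort `W`, state sort `↥S`, relations `E` and membership,
and atom predicates given by `V`. -/
def FOsat {P W : Type} (S : Set (Set W)) (E : W → Set (Set W)) (V : P → Set W) :
    {n m : ℕ} → FO P n m → (Fin n → W) → (Fin m → ↥S) → Prop
  | _, _, .eqW i j, a, _ => a i = a j
  | _, _, .eqS i j, _, b => b i = b j
  | _, _, .rel i j, a, b => (b j : Set W) ∈ E (a i)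
  | _, _, .mem i j, a, b => a i ∈ (b j : Set W)
  | _, _, .atom p i, a, _ => a i ∈ V p
  | _, _, .fal, _, _ => False
  | _, _, .imp φ ψ, a, b => FOsat S E V φ a b → FOsat S E V ψ a b
  | _, _, .allW φ, a, b => ∀ w : W, FOsat S E V φ (Fin.cons w a) b
  | _, _, .allS φ, a, b => ∀ s : ↥S, FOsat S E V φ a (Fin.cons s b)

/-- A relational inquisitive modal model: a two-sorted structure
`⟨W, S, E, ∈, (P_i)⟩` with `S ⊆ ℘(W)` (extensionality built in), satisfying
non-emptiness and downward closure. -/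
structure RelModel (P : Type) where
  W : Type
  S : Set (Set W)
  E : W → Set (Set W)
  V : P → Set W
  wNonempty : Nonempty W
  sNonempty : S.Nonempty
  E_sub : ∀ w, E w ⊆ S
  E_nonempty : ∀ w, (E w).Nonempty
  downward : ∀ w, ∀ s ∈ E w, ∀ t ⊆ s, t ∈ S ∧ t ∈ E w

/-- The inquisitive modal model induced by a relational model:
`Σ(w) := E[w]`, `V(p_i) := P_i`. -/
def RelModel.toInq {P : Type} (𝔐 : RelModel P) : InqModel P where
  W := 𝔐.W
  Sig := 𝔐.E
  Sig_nonempty := 𝔐.E_nonempty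
  Sig_downward := fun w s hs t ht => (𝔐.downward w s hs t ht).2
  V := 𝔐.V

/-- Satisfaction of an `FO` formula with one free world-sort variable at a world. -/
def satW {P : Type} (𝔐 : RelModel P) (φ : FO P 1 0) (w : 𝔐.W) : Prop :=
  FOsat 𝔐.S 𝔐.E 𝔐.V φ (fun _ => w) (fun i => i.elim0)

/-- `φ(x)` is invariant under bisimilarity over the class `C` of relational models. -/
def BisimInvariantOver {P : Type} (C : RelModel P → Prop) (φ : FO P 1 0) : Prop :=
  ∀ (𝔐 𝔐' : RelModel P), C 𝔐 → C 𝔐' → ∀ (w : 𝔐.W) (w' : 𝔐'.W),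
    BisimW 𝔐.toInq 𝔐'.toInq w w' → (satW 𝔐 φ w ↔ satW 𝔐' φ w')

/-- `φ(x)` is invariant under `n`-bisimilarity over the class `C`. -/
def NBisimInvariantOver {P : Type} (C : RelModel P → Prop) (φ : FO P 1 0) (n : ℕ) : Prop :=
  ∀ (𝔐 𝔐' : RelModel P), C 𝔐 → C 𝔐' → ∀ (w : 𝔐.W) (w' : 𝔐'.W),
    NBisimW 𝔐.toInq 𝔐'.toInq n w w' → (satW 𝔐 φ w ↔ satW 𝔐' φ w')

section Aux
variable {P : Type}

/-- Persistence: support is downward closed. -/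
theorem support_mono (M : InqModel P) : ∀ (φ : InqForm P) {s t : Set M.W},
    support M φ s → t ⊆ s → support M φ t
  | .atom p, s, t, hs, hts => hts.trans hs
  | .bot, s, t, hs, hts => by
      simp only [support] at *; exact Set.subset_eq_empty (hs ▸ hts) rfl
  | .and φ ψ, s, t, hs, hts => ⟨support_mono M φ hs.1 hts, support_mono M ψ hs.2 hts⟩
  | .impl φ ψ, s, t, hs, hts => fun u hu hφ => hs u (hu.trans hts) hφ
  | .idisj φ ψ, s, t, hs, hts =>
      hs.elim (fun h => Or.inl (support_mono M φ h hts)) (fun h => Or.inr (support_mono M ψ h hts))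
  | .box φ, s, t, hs, hts => fun w hw => hs w (hts hw)
  | .boxplus φ, s, t, hs, hts => fun w hw => hs w (hts hw)

/-- Negation. -/
def InqForm.neg (φ : InqForm P) : InqForm P := .impl φ .bot

theorem support_neg (M : InqModel P) (φ : InqForm P) (t : Set M.W) :
    support M (.neg φ) t ↔ ∀ w ∈ t, ¬ support M φ {w} := by
  constructor
  · intro h w hw hφ
    have := h {w} (Set.singleton_subset_iff.2 hw) hφ
    simp [support] at this
  · intro h u hu hφ
    show u = ∅
    rw [Set.eq_empty_iff_forall_notMem]
    intro w hw
    exact h w (hu hw) (support_mono M φ hφ (Set.singleton_subset_iff.2 hw))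

def InqForm.top : InqForm P := .impl .bot .bot

theorem support_top (M : InqModel P) (t : Set M.W) : support M .top t := by
  intro u _ h; exact h

def conjList (l : List (InqForm P)) : InqForm P := l.foldr .and .top

theorem support_conjList (M : InqModel P) (l : List (InqForm P)) (t : Set M.W) :
    support M (conjList l) t ↔ ∀ φ ∈ l, support M φ t := by
  induction l with
  | nil => simpa [conjList] using support_top M t
  | cons a l ih =>
      simp only [conjList, List.foldr_cons, List.mem_cons]
      show support M a t ∧ support M (conjList l) t ↔ _
      rw [ih]
      constructor
      · rintro ⟨h1, h2⟩ φ (rfl | hφ); exacts [h1, h2 _ hφ]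
      · intro h; exact ⟨h a (Or.inl rfl), fun φ hφ => h φ (Or.inr hφ)⟩

def disjList (l : List (InqForm P)) : InqForm P := l.foldr .idisj .bot

theorem support_disjList (M : InqModel P) (l : List (InqForm P)) (t : Set M.W) :
    support M (disjList l) t ↔ t = ∅ ∨ ∃ φ ∈ l, support M φ t := by
  induction l with
  | nil => simp [disjList, support]
  | cons a l ih =>
      simp only [disjList, List.foldr_cons, List.mem_cons]
      show support M a t ∨ support M (disjList l) t ↔ _
      rw [ih]
      constructor
      · rintro (h | h | ⟨φ, hφ, h⟩)
        · exact Or.inr ⟨a, Or.inl rfl, h⟩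
        · exact Or.inl h
        · exact Or.inr ⟨φ, Or.inr hφ, h⟩
      · rintro (h | ⟨φ, rfl | hφ, h⟩)
        · exact Or.inr (Or.inl h)
        · exact Or.inl h
        · exact Or.inr (Or.inr ⟨φ, hφ, h⟩)

end Aux
section Types
variable {P : Type}

/-- Abstract `n`-types over atoms `P`. -/
def Ty (P : Type) : ℕ → Type
  | 0 => Set P
  | n + 1 => Set P × Set (Set (Ty P n))

instance Ty.finite [Finite P] : ∀ n, Finite (Ty P n)
  | 0 => by unfold Ty; infer_instance
  | n + 1 => by
      haveI : Finite (Ty P n) := Ty.finite n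
      unfold Ty; infer_instance

/-- The `n`-type of a world. -/
def ty (M : InqModel P) : (n : ℕ) → M.W → Ty P n
  | 0, w => {p | w ∈ M.V p}
  | n + 1, w => ({p | w ∈ M.V p}, {σ | ∃ s ∈ M.Sig w, ty M n '' s = σ})

theorem ty_zero (M : InqModel P) (w : M.W) : ty M 0 w = {p | w ∈ M.V p} := rfl

theorem ty_succ (M : InqModel P) (n : ℕ) (w : M.W) :
    ty M (n + 1) w = ({p | w ∈ M.V p}, {σ | ∃ s ∈ M.Sig w, ty M n '' s = σ}) := rfl

/-- Atomic agreement from `n`-bisimilarity at any level. -/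
theorem NBisimW.atoms {M M' : InqModel P} {n : ℕ} {w : M.W} {w' : M'.W}
    (h : NBisimW M M' n w w') : ∀ p, w ∈ M.V p ↔ w' ∈ M'.V p := by
  cases n with
  | zero => exact h
  | succ n => exact h.1

theorem NBisimW_zero (M M' : InqModel P) (w : M.W) (w' : M'.W) :
    NBisimW M M' 0 w w' ↔ (∀ p : P, w ∈ M.V p ↔ w' ∈ M'.V p) := Iff.rfl

theorem NBisimW_succ (M M' : InqModel P) (n : ℕ) (w : M.W) (w' : M'.W) :
    NBisimW M M' (n + 1) w w' ↔ ((∀ p : P, w ∈ M.V p ↔ w' ∈ M'.V p) ∧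
      (∀ s ∈ M.Sig w, ∃ s' ∈ M'.Sig w', StateRel (NBisimW M M' n) s s') ∧
      (∀ s' ∈ M'.Sig w', ∃ s ∈ M.Sig w, StateRel (NBisimW M M' n) s s')) := Iff.rfl

/-- `n`-type equality coincides with `n`-bisimilarity. -/
theorem ty_eq_iff : ∀ (n : ℕ) (M M' : InqModel P) (w : M.W) (w' : M'.W),
    ty M n w = ty M' n w' ↔ NBisimW M M' n w w'
  | 0, M, M', w, w' => by
      rw [NBisimW_zero, ty_zero, ty_zero]
      change ({p | w ∈ M.V p} : Set P) = {p | w' ∈ M'.V p} ↔ _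
      rw [Set.ext_iff]
      simp only [Set.mem_setOf_eq]
  | n + 1, M, M', w, w' => by
      rw [NBisimW_succ, ty_succ, ty_succ]
      change ((({p | w ∈ M.V p}, {σ | ∃ s ∈ M.Sig w, ty M n '' s = σ}) : Set P × Set (Set (Ty P n))) = ({p | w' ∈ M'.V p}, {σ | ∃ s ∈ M'.Sig w', ty M' n '' s = σ})) ↔ _
      rw [Prod.ext_iff]
      simp only []
      constructor
      · rintro ⟨ha, hts⟩
        refine ⟨fun p => by simpa using Set.ext_iff.1 ha p, ?_, ?_⟩
        · intro s hs
          have : ty M n '' s ∈ {σ | ∃ s' ∈ M'.Sig w', ty M' n '' s' = σ} := by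
            rw [← hts]; exact ⟨s, hs, rfl⟩
          obtain ⟨s', hs', he⟩ := this
          refine ⟨s', hs', ?_, ?_⟩
          · intro v hv
            have : ty M n v ∈ ty M' n '' s' := he ▸ ⟨v, hv, rfl⟩
            obtain ⟨v', hv', hvv⟩ := this
            exact ⟨v', hv', (ty_eq_iff n M M' v v').1 hvv.symm⟩
          · intro v' hv'
            have : ty M' n v' ∈ ty M n '' s := by rw [← he]; exact ⟨v', hv', rfl⟩
            obtain ⟨v, hv, hvv⟩ := this
            exact ⟨v, hv, (ty_eq_iff n M M' v v').1 hvv⟩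
        · intro s' hs'
          have : ty M' n '' s' ∈ {σ | ∃ s ∈ M.Sig w, ty M n '' s = σ} := by
            rw [hts]; exact ⟨s', hs', rfl⟩
          obtain ⟨s, hs, he⟩ := this
          refine ⟨s, hs, ?_, ?_⟩
          · intro v hv
            have : ty M n v ∈ ty M' n '' s' := he ▸ ⟨v, hv, rfl⟩
            obtain ⟨v', hv', hvv⟩ := this
            exact ⟨v', hv', (ty_eq_iff n M M' v v').1 hvv.symm⟩
          · intro v' hv'
            have : ty M' n v' ∈ ty M n '' s := by rw [he]; exact ⟨v', hv', rfl⟩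
            obtain ⟨v, hv, hvv⟩ := this
            exact ⟨v, hv, (ty_eq_iff n M M' v v').1 hvv⟩
      · rintro ⟨ha, hf, hb⟩
        refine ⟨Set.ext fun p => ha p, Set.ext fun σ => ?_⟩
        have key : ∀ (s : Set M.W) (s' : Set M'.W), StateRel (NBisimW M M' n) s s' →
            ty M n '' s = ty M' n '' s' := by
          rintro s s' ⟨h1, h2⟩
          ext τ
          constructor
          · rintro ⟨v, hv, rfl⟩
            obtain ⟨v', hv', hz⟩ := h1 v hv
            exact ⟨v', hv', ((ty_eq_iff n M M' v v').2 hz).symm⟩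
          · rintro ⟨v', hv', rfl⟩
            obtain ⟨v, hv, hz⟩ := h2 v' hv'
            exact ⟨v, hv, (ty_eq_iff n M M' v v').2 hz⟩
        constructor
        · rintro ⟨s, hs, rfl⟩
          obtain ⟨s', hs', hrel⟩ := hf s hs
          exact ⟨s', hs', (key s s' hrel).symm⟩
        · rintro ⟨s', hs', rfl⟩
          obtain ⟨s, hs, hrel⟩ := hb s' hs'
          exact ⟨s, hs, key s s' hrel⟩

end Types
section Ehrenfeucht
variable {P : Type}

theorem NBisimS_sigma {M M' : InqModel P} {n : ℕ} {w : M.W} {w' : M'.W}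
    (h : NBisimW M M' (n + 1) w w') : NBisimS M M' n (M.sigma w) (M'.sigma w') := by
  obtain ⟨-, hf, hb⟩ := (NBisimW_succ M M' n w w').1 h
  constructor
  · rintro v ⟨s, hs, hv⟩
    obtain ⟨s', hs', h1, -⟩ := hf s hs
    obtain ⟨v', hv', hz⟩ := h1 v hv
    exact ⟨v', ⟨s', hs', hv'⟩, hz⟩
  · rintro v' ⟨s', hs', hv'⟩
    obtain ⟨s, hs, -, h2⟩ := hb s' hs'
    obtain ⟨v, hv, hz⟩ := h2 v' hv'
    exact ⟨v, ⟨s, hs, hv⟩, hz⟩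

/-- Formulas of modal depth at most `n` are invariant under `n`-bisimilarity of states. -/
theorem support_nbisim_invariant :
    ∀ (φ : InqForm P) (n : ℕ), mdepth φ ≤ n → ∀ (M M' : InqModel P)
      (s : Set M.W) (s' : Set M'.W), NBisimS M M' n s s' →
      (support M φ s ↔ support M' φ s')
  | .atom p, n, _, M, M', s, s', ⟨h1, h2⟩ => by
      show s ⊆ M.V p ↔ s' ⊆ M'.V p
      constructor
      · intro h v' hv'
        obtain ⟨v, hv, hz⟩ := h2 v' hv'
        exact (hz.atoms p).1 (h hv)
      · intro h v hv
        obtain ⟨v', hv', hz⟩ := h1 v hv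
        exact (hz.atoms p).2 (h hv')
  | .bot, n, _, M, M', s, s', ⟨h1, h2⟩ => by
      show s = ∅ ↔ s' = ∅
      simp only [Set.eq_empty_iff_forall_notMem]
      constructor
      · intro h v' hv'
        obtain ⟨v, hv, -⟩ := h2 v' hv'
        exact h v hv
      · intro h v hv
        obtain ⟨v', hv', -⟩ := h1 v hv
        exact h v' hv'
  | .and φ ψ, n, hd, M, M', s, s', h => by
      rw [mdepth, max_le_iff] at hd
      exact and_congr (support_nbisim_invariant φ n hd.1 M M' s s' h)
        (support_nbisim_invariant ψ n hd.2 M M' s s' h)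
  | .idisj φ ψ, n, hd, M, M', s, s', h => by
      rw [mdepth, max_le_iff] at hd
      exact or_congr (support_nbisim_invariant φ n hd.1 M M' s s' h)
        (support_nbisim_invariant ψ n hd.2 M M' s s' h)
  | .impl φ ψ, n, hd, M, M', s, s', h => by
      rw [mdepth, max_le_iff] at hd
      obtain ⟨h1, h2⟩ := h
      constructor
      · intro hsup t' ht' hφ'
        set t : Set M.W := {v ∈ s | ∃ v' ∈ t', NBisimW M M' n v v'} with htdef
        have hrel : NBisimS M M' n t t' := by
          constructor
          · rintro v ⟨-, v', hv', hz⟩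
            exact ⟨v', hv', hz⟩
          · intro v' hv'
            obtain ⟨v, hv, hz⟩ := h2 v' (ht' hv')
            exact ⟨v, ⟨hv, v', hv', hz⟩, hz⟩
        have hts : t ⊆ s := fun v hv => hv.1
        have := hsup t hts ((support_nbisim_invariant φ n hd.1 M M' t t' hrel).2 hφ')
        exact (support_nbisim_invariant ψ n hd.2 M M' t t' hrel).1 this
      · intro hsup t ht hφ
        set t' : Set M'.W := {v' ∈ s' | ∃ v ∈ t, NBisimW M M' n v v'} with htdef
        have hrel : NBisimS M M' n t t' := by
          constructor
          · intro v hv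
            obtain ⟨v', hv', hz⟩ := h1 v (ht hv)
            exact ⟨v', ⟨hv', v, hv, hz⟩, hz⟩
          · rintro v' ⟨-, v, hv, hz⟩
            exact ⟨v, hv, hz⟩
        have hts : t' ⊆ s' := fun v' hv' => hv'.1
        have := hsup t' hts ((support_nbisim_invariant φ n hd.1 M M' t t' hrel).1 hφ)
        exact (support_nbisim_invariant ψ n hd.2 M M' t t' hrel).2 this
  | .box φ, n, hd, M, M', s, s', ⟨h1, h2⟩ => by
      rw [mdepth] at hd
      obtain ⟨m, rfl⟩ : ∃ m, n = m + 1 := ⟨n - 1, by omega⟩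
      have hdm : mdepth φ ≤ m := by omega
      show (∀ w ∈ s, support M φ (M.sigma w)) ↔ ∀ w' ∈ s', support M' φ (M'.sigma w')
      constructor
      · intro h w' hw'
        obtain ⟨w, hw, hz⟩ := h2 w' hw'
        exact (support_nbisim_invariant φ m hdm M M' _ _ (NBisimS_sigma hz)).1 (h w hw)
      · intro h w hw
        obtain ⟨w', hw', hz⟩ := h1 w hw
        exact (support_nbisim_invariant φ m hdm M M' _ _ (NBisimS_sigma hz)).2 (h w' hw')
  | .boxplus φ, n, hd, M, M', s, s', ⟨h1, h2⟩ => by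
      rw [mdepth] at hd
      obtain ⟨m, rfl⟩ : ∃ m, n = m + 1 := ⟨n - 1, by omega⟩
      have hdm : mdepth φ ≤ m := by omega
      show (∀ w ∈ s, ∀ t ∈ M.Sig w, support M φ t) ↔
        ∀ w' ∈ s', ∀ t' ∈ M'.Sig w', support M' φ t'
      constructor
      · intro h w' hw' t' ht'
        obtain ⟨w, hw, hz⟩ := h2 w' hw'
        obtain ⟨-, -, hb⟩ := (NBisimW_succ M M' m w w').1 hz
        obtain ⟨t, ht, hrel⟩ := hb t' ht'
        exact (support_nbisim_invariant φ m hdm M M' t t' hrel).1 (h w hw t ht)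
      · intro h w hw t ht
        obtain ⟨w', hw', hz⟩ := h1 w hw
        obtain ⟨-, hf, -⟩ := (NBisimW_succ M M' m w w').1 hz
        obtain ⟨t', ht', hrel⟩ := hf t ht
        exact (support_nbisim_invariant φ m hdm M M' t t' hrel).2 (h w' hw' t' ht')

end Ehrenfeucht
section Chi
variable {P : Type}

open Classical in
/-- Characteristic formula for an atomic valuation. -/
theorem exists_chiA [Finite P] : ∃ χA : Set P → InqForm P,
    ∀ (M : InqModel P) (t : Set M.W) (a : Set P),
      support M (χA a) t ↔ ∀ w ∈ t, {p | w ∈ M.V p} = a := by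
  haveI := Fintype.ofFinite P
  refine ⟨fun a => conjList (Finset.univ.toList.map
    (fun p => if p ∈ a then .atom p else .neg (.atom p))), ?_⟩
  intro M t a
  rw [support_conjList]
  constructor
  · intro h w hw
    ext p
    have hp := h _ (List.mem_map.2 ⟨p, by simp, rfl⟩)
    simp only [Set.mem_setOf_eq]
    by_cases hpa : p ∈ a
    · rw [if_pos hpa] at hp
      exact ⟨fun _ => hpa, fun _ => hp hw⟩
    · rw [if_neg hpa] at hp
      have := (support_neg M _ t).1 hp w hw
      refine ⟨fun hwv => absurd ?_ this, fun hpa' => absurd hpa' hpa⟩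
      exact Set.singleton_subset_iff.2 hwv
  · intro h φ hφ
    obtain ⟨p, -, rfl⟩ := List.mem_map.1 hφ
    by_cases hpa : p ∈ a
    · rw [if_pos hpa]
      intro w hw
      have := h w hw
      rw [Set.ext_iff] at this
      exact (this p).2 hpa
    · rw [if_neg hpa]
      rw [support_neg]
      intro w hw hsup
      have := h w hw
      rw [Set.ext_iff] at this
      exact hpa ((this p).1 (hsup rfl))

/-- The type-set of any world is "nice": contains `∅` and is downward closed. -/
theorem tyset_nice (M : InqModel P) (n : ℕ) (w : M.W) :
    ∅ ∈ {σ | ∃ s ∈ M.Sig w, ty M n '' s = σ} ∧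
    ∀ σ ∈ {σ | ∃ s ∈ M.Sig w, ty M n '' s = σ}, ∀ σ' ⊆ σ,
      σ' ∈ {σ | ∃ s ∈ M.Sig w, ty M n '' s = σ} := by
  constructor
  · obtain ⟨s, hs⟩ := M.Sig_nonempty w
    exact ⟨∅, M.Sig_downward w s hs ∅ (Set.empty_subset s), Set.image_empty _⟩
  · rintro σ ⟨s, hs, rfl⟩ σ' hσ'
    refine ⟨{v ∈ s | ty M n v ∈ σ'}, M.Sig_downward w s hs _ (fun v hv => hv.1), ?_⟩
    ext τ
    constructor
    · rintro ⟨v, ⟨-, hvτ⟩, rfl⟩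
      exact hvτ
    · intro hτ
      obtain ⟨v, hv, rfl⟩ := hσ' hτ
      exact ⟨v, ⟨hv, hτ⟩, rfl⟩

noncomputable def enumList (α : Type) [Finite α] : List α :=
  (Fintype.ofFinite α).elems.toList

theorem mem_enumList {α : Type} [Finite α] (a : α) : a ∈ enumList α :=
  Finset.mem_toList.2 ((Fintype.ofFinite α).complete a)

open Classical in
noncomputable def listInSet {α : Type} [Finite α] (σ : Set α) : List α :=
  (enumList α).filter (fun a => a ∈ σ)

theorem mem_listInSet {α : Type} [Finite α] (σ : Set α) (a : α) :
    a ∈ listInSet σ ↔ a ∈ σ := by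
  simp [listInSet, List.mem_filter, mem_enumList]

variable [Finite P]

/-- "Every world in the state has `n`-type in `σ`". -/
noncomputable def Dform {n : ℕ} (χ : Ty P n → InqForm P) (σ : Set (Ty P n)) : InqForm P :=
  .neg (conjList ((listInSet σ).map (fun τ => .neg (χ τ))))

/-- "Some type of `σ` is realized nowhere in the state". -/
noncomputable def Innerform {n : ℕ} (χ : Ty P n → InqForm P) (σ : Set (Ty P n)) : InqForm P :=
  disjList ((listInSet σ).map (fun τ => .neg (χ τ)))

noncomputable def Forthform {n : ℕ} (χ : Ty P n → InqForm P) (Ts : Set (Set (Ty P n))) :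
    InqForm P :=
  .boxplus (disjList ((listInSet Ts).map (Dform χ)))

noncomputable def Backform {n : ℕ} (χ : Ty P n → InqForm P) (Ts : Set (Set (Ty P n))) :
    InqForm P :=
  conjList ((listInSet {σ | σ ∈ Ts ∧ σ.Nonempty}).map
    (fun σ => .neg (.boxplus (Innerform χ σ))))

def NiceTS {n : ℕ} (Ts : Set (Set (Ty P n))) : Prop :=
  ∅ ∈ Ts ∧ ∀ σ ∈ Ts, ∀ σ' ⊆ σ, σ' ∈ Ts

section ChiLemmas

variable {n : ℕ} {χ : Ty P n → InqForm P}
  (hχ : ∀ (M : InqModel P) (t : Set M.W) (τ : Ty P n),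
    support M (χ τ) t ↔ ∀ w ∈ t, ty M n w = τ)

include hχ

theorem support_Dform (M : InqModel P) (s : Set M.W) (σ : Set (Ty P n)) :
    support M (Dform χ σ) s ↔ ∀ v ∈ s, ty M n v ∈ σ := by
  rw [Dform, support_neg]
  refine forall₂_congr (fun v hv => ?_)
  rw [support_conjList]
  push_neg
  constructor
  · rintro ⟨φ, hmem, hnsup⟩
    obtain ⟨τ, hτ, rfl⟩ := List.mem_map.1 hmem
    rw [mem_listInSet] at hτ
    rw [support_neg] at hnsup
    push_neg at hnsup
    obtain ⟨u, hu, hsup⟩ := hnsup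
    rw [Set.mem_singleton_iff] at hu
    subst hu
    have := (hχ M {u} τ).1 hsup u rfl
    rw [this]; exact hτ
  · intro hmem
    refine ⟨.neg (χ (ty M n v)), List.mem_map.2 ⟨_, (mem_listInSet _ _).2 hmem, rfl⟩, ?_⟩
    rw [support_neg]
    push_neg
    exact ⟨v, rfl, (hχ M {v} _).2
      (fun u hu => by rw [Set.mem_singleton_iff] at hu; rw [hu])⟩

theorem support_Innerform (M : InqModel P) (s : Set M.W) (σ : Set (Ty P n)) :
    support M (Innerform χ σ) s ↔ s = ∅ ∨ ∃ τ ∈ σ, ∀ v ∈ s, ty M n v ≠ τ := by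
  rw [Innerform, support_disjList]
  refine or_congr Iff.rfl ?_
  constructor
  · rintro ⟨φ, hmem, hsup⟩
    obtain ⟨τ, hτ, rfl⟩ := List.mem_map.1 hmem
    rw [mem_listInSet] at hτ
    refine ⟨τ, hτ, fun v hv hty => ?_⟩
    exact (support_neg M _ _).1 hsup v hv ((hχ M {v} τ).2
      (fun u hu => by rw [Set.mem_singleton_iff] at hu; rw [hu, hty]))
  · rintro ⟨τ, hτ, hall⟩
    refine ⟨.neg (χ τ), List.mem_map.2 ⟨τ, (mem_listInSet _ _).2 hτ, rfl⟩, ?_⟩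
    rw [support_neg]
    intro v hv hsup
    exact hall v hv ((hχ M {v} τ).1 hsup v rfl)

theorem support_Forthform (M : InqModel P) (t : Set M.W) (Ts : Set (Set (Ty P n))) :
    support M (Forthform χ Ts) t ↔
      ∀ w ∈ t, ∀ s ∈ M.Sig w, s = ∅ ∨ ∃ σ ∈ Ts, ∀ v ∈ s, ty M n v ∈ σ := by
  rw [Forthform]
  show (∀ w ∈ t, ∀ s ∈ M.Sig w, support M _ s) ↔ _
  refine forall₂_congr (fun w hw => forall₂_congr (fun s hs => ?_))
  rw [support_disjList]
  refine or_congr Iff.rfl ?_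
  constructor
  · rintro ⟨φ, hmem, hsup⟩
    obtain ⟨σ, hσ, rfl⟩ := List.mem_map.1 hmem
    rw [mem_listInSet] at hσ
    exact ⟨σ, hσ, (support_Dform hχ M s σ).1 hsup⟩
  · rintro ⟨σ, hσ, hall⟩
    exact ⟨Dform χ σ, List.mem_map.2 ⟨σ, (mem_listInSet _ _).2 hσ, rfl⟩,
      (support_Dform hχ M s σ).2 hall⟩

omit hχ in
theorem support_Backform (M : InqModel P) (t : Set M.W) (Ts : Set (Set (Ty P n))) :
    support M (Backform χ Ts) t ↔
      ∀ σ ∈ Ts, σ.Nonempty → ∀ w ∈ t,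
        ¬ ∀ s ∈ M.Sig w, support M (Innerform χ σ) s := by
  rw [Backform, support_conjList]
  constructor
  · intro h σ hσ hne w hw hall
    have hmem : InqForm.neg (.boxplus (Innerform χ σ)) ∈
        (listInSet {σ | σ ∈ Ts ∧ σ.Nonempty}).map (fun σ => .neg (.boxplus (Innerform χ σ))) :=
      List.mem_map.2 ⟨σ, (mem_listInSet _ _).2 ⟨hσ, hne⟩, rfl⟩
    have := (support_neg M _ _).1 (h _ hmem) w hw
    refine this ?_
    intro u hu s hs
    rw [Set.mem_singleton_iff] at hu
    subst hu
    exact hall s hs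
  · intro h φ hmem
    obtain ⟨σ, hσ, rfl⟩ := List.mem_map.1 hmem
    rw [mem_listInSet] at hσ
    rw [support_neg]
    intro w hw hsup
    refine h σ hσ.1 hσ.2 w hw ?_
    intro s hs
    exact hsup w rfl s hs

end ChiLemmas

open Classical in
/-- Characteristic formulas for abstract `n`-types. -/
theorem exists_chi : ∀ n : ℕ, ∃ χ : Ty P n → InqForm P,
    ∀ (M : InqModel P) (t : Set M.W) (τ : Ty P n),
      support M (χ τ) t ↔ ∀ w ∈ t, ty M n w = τ
  | 0 => by
      obtain ⟨χA, hA⟩ := exists_chiA (P := P)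
      exact ⟨χA, fun M t τ => hA M t τ⟩
  | n + 1 => by
      classical
      obtain ⟨χ, hχ⟩ := exists_chi n
      obtain ⟨χA, hA⟩ := exists_chiA (P := P)
      refine ⟨fun τ => if NiceTS τ.2 then
        .and (χA τ.1) (.and (Forthform χ τ.2) (Backform χ τ.2)) else .bot, ?_⟩
      rintro M t ⟨a, Ts⟩
      dsimp only
      by_cases hn : NiceTS Ts
      · rw [if_pos hn]
        have hsplit : support M (.and (χA a) (.and (Forthform χ Ts) (Backform χ Ts))) t ↔
            support M (χA a) t ∧ support M (Forthform χ Ts) t ∧ support M (Backform χ Ts) t :=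
          Iff.rfl
        rw [hsplit, hA, support_Forthform hχ, support_Backform]
        constructor
        · rintro ⟨h1, h2, h3⟩ w hw
          rw [ty_succ]
          have hTS : {σ | ∃ s ∈ M.Sig w, ty M n '' s = σ} = Ts := by
            apply Set.Subset.antisymm
            · rintro σ₀ ⟨s, hs, rfl⟩
              rcases h2 w hw s hs with rfl | ⟨σ, hσ, hsub⟩
              · rw [Set.image_empty]; exact hn.1
              · exact hn.2 σ hσ _ (fun τ hτ => by
                  obtain ⟨v, hv, rfl⟩ := hτ; exact hsub v hv)
            · intro σ hσ
              by_cases hσe : σ = ∅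
              · subst hσe; exact (tyset_nice M n w).1
              · have hne : σ.Nonempty := Set.nonempty_iff_ne_empty.2 hσe
                have := h3 σ hσ hne w hw
                push_neg at this
                obtain ⟨s, hs, hnsup⟩ := this
                rw [support_Innerform hχ] at hnsup
                push_neg at hnsup
                obtain ⟨hse, hsub⟩ := hnsup
                have hσsub : σ ⊆ ty M n '' s := by
                  intro τ hτ
                  obtain ⟨v, hv, hvt⟩ := hsub τ hτ
                  exact ⟨v, hv, hvt⟩
                exact (tyset_nice M n w).2 _ ⟨s, hs, rfl⟩ σ hσsub
          rw [hTS, h1 w hw]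
        · intro h
          have key : ∀ w ∈ t, {p | w ∈ M.V p} = a ∧
              {σ | ∃ s ∈ M.Sig w, ty M n '' s = σ} = Ts := by
            intro w hw
            have := h w hw
            rw [ty_succ] at this; replace this := Prod.mk.inj this
            exact this
          refine ⟨fun w hw => (key w hw).1, ?_, ?_⟩
          · intro w hw s hs
            refine Or.inr ⟨ty M n '' s, ?_, fun v hv => ⟨v, hv, rfl⟩⟩
            rw [← (key w hw).2]
            exact ⟨s, hs, rfl⟩
          · intro σ hσ hne w hw hall
            rw [← (key w hw).2] at hσ
            obtain ⟨s, hs, rfl⟩ := hσ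
            have := (support_Innerform hχ M s _).1 (hall s hs)
            rcases this with rfl | ⟨τ, hτ, hnone⟩
            · rw [Set.image_empty] at hne
              exact Set.not_nonempty_empty hne
            · obtain ⟨v, hv, rfl⟩ := hτ
              exact hnone v hv rfl
      · rw [if_neg hn]
        show t = ∅ ↔ _
        constructor
        · rintro rfl w hw
          exact absurd hw (Set.notMem_empty w)
        · intro h
          rw [Set.eq_empty_iff_forall_notMem]
          intro w hw
          have := h w hw
          rw [ty_succ] at this; replace this := Prod.mk.inj this
          refine hn ?_
          rw [← this.2]
          exact ⟨(tyset_nice M n w).1, (tyset_nice M n w).2⟩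

end Chi
/-- **Compactness criterion for the characterisation**: over any class `C` of
relational inquisitive modal models, `InqML ≡ FO/~` for world properties iff
every `~`-invariant `FO` formula is `~^n`-invariant over `C` for some `n`. -/
theorem compactness_criterion {P : Type} [Finite P] (C : RelModel P → Prop) :
    (∀ φ : FO P 1 0, BisimInvariantOver C φ →
      ∃ ψ : InqForm P, ∀ 𝔐 : RelModel P, C 𝔐 → ∀ w : 𝔐.W,
        (satW 𝔐 φ w ↔ truth 𝔐.toInq w ψ)) ↔
    (∀ φ : FO P 1 0, BisimInvariantOver C φ →
      ∃ n : ℕ, NBisimInvariantOver C φ n) := by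
  constructor
  · intro h φ hφ
    obtain ⟨ψ, hψ⟩ := h φ hφ
    refine ⟨mdepth ψ, ?_⟩
    intro 𝔐 𝔐' hC hC' w w' hb
    rw [hψ 𝔐 hC w, hψ 𝔐' hC' w']
    have hsing : NBisimS 𝔐.toInq 𝔐'.toInq (mdepth ψ) ({w} : Set 𝔐.W) ({w'} : Set 𝔐'.W) := by
      constructor
      · intro v hv
        replace hv : v = w := hv
        subst hv
        exact ⟨w', rfl, hb⟩
      · intro v' hv'
        replace hv' : v' = w' := hv'
        subst hv'
        exact ⟨w, rfl, hb⟩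
    exact support_nbisim_invariant ψ (mdepth ψ) le_rfl _ _ _ _ hsing
  · intro h φ hφ
    obtain ⟨n, hn⟩ := h φ hφ
    obtain ⟨χ, hχ⟩ := exists_chi (P := P) n
    classical
    set A : Set (Ty P n) :=
      {τ | ∃ 𝔐 : RelModel P, C 𝔐 ∧ ∃ w : 𝔐.W, ty 𝔐.toInq n w = τ ∧ satW 𝔐 φ w} with hA
    refine ⟨disjList ((listInSet A).map χ), ?_⟩
    intro 𝔐 hC w
    unfold truth
    rw [support_disjList]
    constructor
    · intro hsat
      refine Or.inr ⟨χ (ty 𝔐.toInq n w), List.mem_map.2 ⟨_, (mem_listInSet _ _).2 ?_, rfl⟩, ?_⟩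
      · exact ⟨𝔐, hC, w, rfl, hsat⟩
      · exact (hχ 𝔐.toInq {w} _).2 (fun u hu => by replace hu : u = w := hu; rw [hu])
    · rintro (he | ⟨ψ, hmem, hsup⟩)
      · exact absurd he (Set.singleton_ne_empty w)
      · obtain ⟨τ, hτ, rfl⟩ := List.mem_map.1 hmem
        rw [mem_listInSet, hA] at hτ
        obtain ⟨𝔐', hC', w', hty, hsat⟩ := hτ
        have hw : ty 𝔐.toInq n w = τ := (hχ 𝔐.toInq {w} τ).1 hsup w rfl
        have hbis : NBisimW 𝔐'.toInq 𝔐.toInq n w' w :=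
          (ty_eq_iff n 𝔐'.toInq 𝔐.toInq w' w).1 (hty.trans hw.symm)
        exact (hn 𝔐' 𝔐 hC' hC w' w hbis).1 hsat
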